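/- For any finite simple graph G, the clique number of G is at most the Lovász theta number of the complement of G, which in turn is at most the chromatic number of G. -/

import Mathlib

open scoped BigOperators

lemma quad_nonneg {n : ℕ} (X : Matrix (Fin n) (Fin n) ℝ) (hX : X.PosSemidef)
    (v : Fin n → ℝ) : 0 ≤ ∑ i, ∑ j, v i * (X i j * v j) := by
  have := hX.dotProduct_mulVec_nonneg v
  simpa [dotProduct, Matrix.mulVec, Finset.mul_sum, mul_assoc] using this

lemma theta_bound {n m : ℕ} (G : SimpleGraph (Fin n)) (C : G.Coloring (Fin m))
    (X : Matrix (Fin n) (Fin n) ℝ) (hPSD : X.PosSemidef) (htr : X.trace = 1)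
    (hedge : ∀ i j, Gᶜ.Adj i j → X i j = 0) :
    ∑ i, ∑ j, X i j ≤ (m : ℝ) := by
  classical
  set w : Fin m → Fin n → ℝ := fun t i => if C i = t then 1 else 0 with hw
  set Q : Fin m → ℝ := fun t => ∑ i, ∑ j, w t i * (X i j * w t j) with hQ
  set P : Fin m → Fin m → ℝ := fun t s => ∑ i, ∑ j, w t i * (X i j * w s j) with hP
  have hsym : ∀ i j, X j i = X i j := by
    intro i j
    have := hPSD.1
    rw [Matrix.IsHermitian] at this
    have := congrFun (congrFun this j) i
    simpa [Matrix.conjTranspose_apply] using this.symm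
  have hwsum : ∀ i, ∑ t, w t i = 1 := by
    intro i; simp [hw]
  have hzero : ∀ i j, i ≠ j → C i = C j → X i j = 0 := by
    intro i j hij hc
    apply hedge
    refine ⟨hij, fun hadj => ?_⟩
    exact C.valid hadj hc
  have hQsum : ∑ t, Q t = 1 := by
    have key : ∀ i j : Fin n, ∑ t, w t i * (X i j * w t j)
        = if j = i then X i i else 0 := by
      intro i j
      by_cases hij : i = j
      · subst hij
        simp [hw, Finset.sum_ite_eq', mul_comm]
      · by_cases hc : C i = C j
        · have : X i j = 0 := hzero i j hij hc
          simp [this, if_neg (Ne.symm hij)]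
        · rw [if_neg (Ne.symm hij)]
          apply Finset.sum_eq_zero
          intro t _
          by_cases h1 : C i = t
          · have : ¬ C j = t := fun h2 => hc (h1.trans h2.symm)
            simp [hw, this]
          · simp [hw, h1]
    calc ∑ t, Q t = ∑ i, ∑ j, ∑ t, w t i * (X i j * w t j) := by
          rw [hQ, Finset.sum_comm]
          exact Finset.sum_congr rfl fun i _ => Finset.sum_comm
      _ = ∑ i, ∑ j, if j = i then X i i else 0 :=
          Finset.sum_congr rfl fun i _ => Finset.sum_congr rfl fun j _ => key i j
      _ = ∑ i : Fin n, X i i := by simp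
      _ = 1 := htr
  have hQnn : ∀ t, 0 ≤ Q t := fun t => quad_nonneg X hPSD (w t)
  have hPsymm : ∀ t s, P s t = P t s := by
    intro t s
    show ∑ i, ∑ j, w s i * (X i j * w t j) = ∑ i, ∑ j, w t i * (X i j * w s j)
    rw [Finset.sum_comm]
    refine Finset.sum_congr rfl fun i _ => Finset.sum_congr rfl fun j _ => ?_
    rw [hsym j i]; ring
  have hcross : ∀ t s, P t s ≤ (Q t + Q s) / 2 := by
    intro t s
    have h0 := quad_nonneg X hPSD (w t - w s)
    have hexp : ∑ i, ∑ j, (w t - w s) i * (X i j * (w t - w s) j)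
        = Q t - P t s - P s t + Q s := by
      show _ = (∑ i, ∑ j, w t i * (X i j * w t j)) - (∑ i, ∑ j, w t i * (X i j * w s j))
        - (∑ i, ∑ j, w s i * (X i j * w t j)) + (∑ i, ∑ j, w s i * (X i j * w s j))
      simp only [Pi.sub_apply, ← Finset.sum_sub_distrib, ← Finset.sum_add_distrib]
      exact Finset.sum_congr rfl fun i _ => Finset.sum_congr rfl fun j _ => by ring
    rw [hexp, hPsymm t s] at h0
    linarith
  have htotal : ∑ i, ∑ j, X i j = ∑ t, ∑ s, P t s := by
    have key : ∀ i j : Fin n, X i j = ∑ t, ∑ s, w t i * (X i j * w s j) := by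
      intro i j
      calc X i j = (∑ t, w t i) * (X i j * (∑ s, w s j)) := by
              rw [hwsum, hwsum]; ring
        _ = ∑ t, ∑ s, w t i * (X i j * w s j) := by
              rw [Finset.sum_mul]
              exact Finset.sum_congr rfl fun t _ => by simp only [Finset.mul_sum]
    calc ∑ i, ∑ j, X i j = ∑ i, ∑ j, ∑ t, ∑ s, w t i * (X i j * w s j) :=
          Finset.sum_congr rfl fun i _ => Finset.sum_congr rfl fun j _ => key i j
      _ = ∑ i, ∑ t, ∑ j, ∑ s, w t i * (X i j * w s j) :=
          Finset.sum_congr rfl fun i _ => Finset.sum_comm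
      _ = ∑ t, ∑ i, ∑ j, ∑ s, w t i * (X i j * w s j) := Finset.sum_comm
      _ = ∑ t, ∑ i, ∑ s, ∑ j, w t i * (X i j * w s j) :=
          Finset.sum_congr rfl fun t _ =>
            Finset.sum_congr rfl fun i _ => Finset.sum_comm
      _ = ∑ t, ∑ s, ∑ i, ∑ j, w t i * (X i j * w s j) :=
          Finset.sum_congr rfl fun t _ => Finset.sum_comm
      _ = ∑ t, ∑ s, P t s := rfl
  rw [htotal]
  have e1 : ∀ t, ∑ s : Fin m, (Q t + Q s) / 2 = ((m : ℝ) * Q t + 1) / 2 := by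
    intro t
    rw [← Finset.sum_div, Finset.sum_add_distrib, Finset.sum_const, hQsum]
    simp [nsmul_eq_mul, mul_comm]
  calc ∑ t, ∑ s, P t s ≤ ∑ t, ∑ s, (Q t + Q s) / 2 :=
        Finset.sum_le_sum fun t _ => Finset.sum_le_sum fun s _ => hcross t s
    _ = ∑ t, ((m : ℝ) * Q t + 1) / 2 := Finset.sum_congr rfl fun t _ => e1 t
    _ = (m : ℝ) := by
        rw [← Finset.sum_div, Finset.sum_add_distrib, ← Finset.mul_sum, hQsum,
          Finset.sum_const]
        simp only [nsmul_eq_mul, mul_one, Finset.card_univ, Fintype.card_fin]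
        ring


lemma clique_matrix_mem {n k : ℕ} (hk : 0 < k) (s : Finset (Fin n)) (hcard : s.card = k) :
    ∃ X : Matrix (Fin n) (Fin n) ℝ, X.PosSemidef ∧ X.trace = 1 ∧
      (∀ i j, i ∈ s → j ∈ s → True) ∧
      ((k : ℝ) = ∑ i, ∑ j, X i j) ∧
      (∀ i j, (i ∉ s ∨ j ∉ s) → X i j = 0) ∧
      (∀ i, i ∈ s → ∀ j, j ∈ s → X i j = (k : ℝ)⁻¹) := by
  classical
  set X : Matrix (Fin n) (Fin n) ℝ :=
    fun i j => if i ∈ s ∧ j ∈ s then (k : ℝ)⁻¹ else 0 with hX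
  have hk' : (0 : ℝ) < (k : ℝ) := by exact_mod_cast hk
  have hherm : X.IsHermitian := by
    rw [Matrix.IsHermitian]
    ext i j
    rw [Matrix.conjTranspose_apply]; simp [hX, and_comm]
  have hquad : ∀ x : Fin n → ℝ,
      dotProduct x (Matrix.mulVec X x) = (k : ℝ)⁻¹ * (∑ i ∈ s, x i)^2 := by
    intro x
    simp only [dotProduct, Matrix.mulVec]
    have inner : ∀ i, (∑ j, X i j * x j)
        = if i ∈ s then (k : ℝ)⁻¹ * ∑ j ∈ s, x j else 0 := by
      intro i
      by_cases hi : i ∈ s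
      · rw [if_pos hi]
        rw [Finset.mul_sum]
        rw [← Finset.sum_subset (Finset.subset_univ s)]
        · exact Finset.sum_congr rfl fun j hj => by simp [hX, hi, hj]
        · intro j _ hj; simp [hX, hj]
      · rw [if_neg hi]
        apply Finset.sum_eq_zero
        intro j _; simp [hX, hi]
    calc ∑ i, x i * ∑ j, X i j * x j
        = ∑ i, x i * (if i ∈ s then (k : ℝ)⁻¹ * ∑ j ∈ s, x j else 0) :=
          Finset.sum_congr rfl fun i _ => by rw [inner i]
      _ = ∑ i ∈ s, x i * ((k : ℝ)⁻¹ * ∑ j ∈ s, x j) := by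
          rw [← Finset.sum_subset (Finset.subset_univ s)]
          · exact Finset.sum_congr rfl fun i hi => by rw [if_pos hi]
          · intro i _ hi; rw [if_neg hi, mul_zero]
      _ = (k : ℝ)⁻¹ * (∑ i ∈ s, x i)^2 := by
          rw [← Finset.sum_mul]; ring
  have hpsd : X.PosSemidef := by
    refine Matrix.PosSemidef.of_dotProduct_mulVec_nonneg hherm fun x => ?_
    have : star x = x := by simp
    rw [this, hquad]
    positivity
  have htr : X.trace = 1 := by
    rw [Matrix.trace]
    have : ∀ i : Fin n, Matrix.diag X i = if i ∈ s then (k : ℝ)⁻¹ else 0 := by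
      intro i; simp [hX, Matrix.diag]
    rw [Finset.sum_congr rfl fun i _ => this i]
    rw [Finset.sum_ite_mem, Finset.univ_inter, Finset.sum_const, hcard, nsmul_eq_mul]
    field_simp
  have hsum : (k : ℝ) = ∑ i, ∑ j, X i j := by
    have inner : ∀ i, (∑ j, X i j) = if i ∈ s then (k : ℝ)⁻¹ * k else 0 := by
      intro i
      by_cases hi : i ∈ s
      · rw [if_pos hi]
        have : ∀ j : Fin n, X i j = if j ∈ s then (k : ℝ)⁻¹ else 0 := by
          intro j; simp [hX, hi]
        rw [Finset.sum_congr rfl fun j _ => this j, Finset.sum_ite_mem,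
          Finset.univ_inter, Finset.sum_const, hcard, nsmul_eq_mul]
        ring
      · rw [if_neg hi]
        exact Finset.sum_eq_zero fun j _ => by simp [hX, hi]
    rw [Finset.sum_congr rfl fun i _ => inner i, Finset.sum_ite_mem,
      Finset.univ_inter, Finset.sum_const, hcard, nsmul_eq_mul]
    field_simp
  refine ⟨X, hpsd, htr, fun _ _ _ _ => trivial, hsum, ?_, ?_⟩
  · intro i j h
    rcases h with h | h <;> simp [hX, h]
  · intro i hi j hj; simp [hX, hi, hj]

/-- The Lovász theta number of a graph `G` on `n` vertices: the supremum of `∑_{i,j} X i j`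
over symmetric positive semidefinite `X` with trace `1` and `X i j = 0` on edges of `G`. -/
noncomputable def lovaszTheta {n : ℕ} (G : SimpleGraph (Fin n)) : ℝ :=
  sSup {t : ℝ | ∃ X : Matrix (Fin n) (Fin n) ℝ, X.PosSemidef ∧
    X.trace = 1 ∧ (∀ i j, G.Adj i j → X i j = 0) ∧ t = ∑ i, ∑ j, X i j}

/-- Clique number ≤ Lovász theta of the complement ≤ chromatic number. -/
theorem clique_le_lovaszTheta_compl_le_chromatic {n : ℕ} (G : SimpleGraph (Fin n)) :
    (∀ (k : ℕ) (s : Finset (Fin n)), G.IsNClique k s → (k : ℝ) ≤ lovaszTheta Gᶜ) ∧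
    (∀ m : ℕ, G.Colorable m → lovaszTheta Gᶜ ≤ (m : ℝ)) := by
  classical
  set S : Set ℝ := {t : ℝ | ∃ X : Matrix (Fin n) (Fin n) ℝ, X.PosSemidef ∧
    X.trace = 1 ∧ (∀ i j, Gᶜ.Adj i j → X i j = 0) ∧ t = ∑ i, ∑ j, X i j} with hS
  have hmem_le : ∀ (m : ℕ), G.Colorable m → ∀ t ∈ S, t ≤ (m : ℝ) := by
    intro m hcol t ht
    obtain ⟨C⟩ := hcol
    obtain ⟨X, hpsd, htr, hedge, rfl⟩ := ht
    exact theta_bound G C X hpsd htr hedge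
  have hcoln : G.Colorable n := by
    have := G.colorable_of_fintype
    simpa using this
  have hbdd : BddAbove S := ⟨(n : ℝ), fun t ht => hmem_le n hcoln t ht⟩
  constructor
  · intro k s hks
    rcases Nat.eq_zero_or_pos k with hk0 | hkpos
    · subst hk0
      simp only [Nat.cast_zero]
      rcases Nat.eq_zero_or_pos n with hn0 | hnpos
      · subst hn0
        have hSempty : S = ∅ := by
          ext t
          simp only [hS, Set.mem_setOf_eq, Set.mem_empty_iff_false, iff_false]
          rintro ⟨X, _, htr, _, _⟩
          have : X.trace = 0 := by
            rw [Matrix.trace]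
            exact Finset.sum_of_isEmpty _
          rw [this] at htr
          exact one_ne_zero htr.symm
        rw [lovaszTheta, ← hS, hSempty, Real.sSup_empty]
      · have hmem : (1 : ℝ) ∈ S := by
          refine ⟨Matrix.diagonal (fun _ => (n : ℝ)⁻¹), ?_, ?_, ?_, ?_⟩
          · exact Matrix.PosSemidef.diagonal (fun _ => by positivity)
          · rw [Matrix.trace_diagonal]
            rw [Finset.sum_const, Finset.card_univ, Fintype.card_fin, nsmul_eq_mul]
            field_simp
          · intro i j hij
            exact Matrix.diagonal_apply_ne _ hij.ne
          · have : ∀ i : Fin n, ∑ j, Matrix.diagonal (fun _ => (n : ℝ)⁻¹) i j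
                = (n : ℝ)⁻¹ := by
              intro i
              rw [Finset.sum_eq_single i]
              · simp [Matrix.diagonal_apply_eq]
              · intro j _ hj; exact Matrix.diagonal_apply_ne' _ hj
              · intro h; exact absurd (Finset.mem_univ i) h
            rw [Finset.sum_congr rfl fun i _ => this i, Finset.sum_const,
              Finset.card_univ, Fintype.card_fin, nsmul_eq_mul]
            field_simp
        have := le_csSup hbdd hmem
        rw [lovaszTheta, ← hS]
        linarith
    · have hcard : s.card = k := hks.2
      obtain ⟨X, hpsd, htr, -, hsum, hzero, -⟩ := clique_matrix_mem hkpos s hcard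
      have hmem : (k : ℝ) ∈ S := by
        refine ⟨X, hpsd, htr, ?_, hsum⟩
        intro i j hadj
        rw [SimpleGraph.compl_adj] at hadj
        by_cases hi : i ∈ s
        · by_cases hj : j ∈ s
          · exact absurd (hks.1 hi hj hadj.1) hadj.2
          · exact hzero i j (Or.inr hj)
        · exact hzero i j (Or.inl hi)
      rw [lovaszTheta, ← hS]
      exact le_csSup hbdd hmem
  · intro m hcol
    rw [lovaszTheta, ← hS]
    exact Real.sSup_le (hmem_le m hcol) (Nat.cast_nonneg m)
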